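/- arXiv:1701.01812 — 3 statements merged into one kernel-verified Lean document; each statement's English description precedes it below -/
import Mathlib

section
/- Let P be a path in T with vertex sequence p(1),…,p(k), let u be a vertex not on P that is adjacent in T to the endpoint p(k), and let P' = P ∪ {u}. Then S̄(P') = S̄(P) + (2/vt)·w_{T_u}·(w(T) − w_{T_u})·d(P,u). -/
open scoped ENNReal

noncomputable section

/-- A finite tree with positive edge lengths, nonnegative vertex weights,
and a positive cruising speed. -/
structure WeightedTree (V : Type*) [Fintype V] where
  G : SimpleGraph V
  isTree : G.IsTree
  len : Sym2 V → ℝ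
  len_pos : ∀ e ∈ G.edgeSet, 0 < len e
  w : V → ℝ
  w_nonneg : ∀ v, 0 ≤ w v
  vt : ℝ
  vt_pos : 0 < vt

namespace WeightedTree

variable {V : Type*} [Fintype V] [DecidableEq V] (T : WeightedTree V)

/-- `d x y`: the length of the unique path between `x` and `y`. -/
def d (x y : V) : ℝ :=
  (((T.isTree.existsUnique_path x y).choose).edges.map T.len).sum

/-- The closest vertex of the list `l` (the vertex sequence of a path) to `v`. -/
def closest (l : List V) (v : V) : V :=
  if h : ∃ u ∈ l, ∀ u' ∈ l, T.d u v ≤ T.d u' v then h.choose else v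

/-- `d(P,v)`: the distance from the path with vertex sequence `l` to `v`. -/
def dP (l : List V) (v : V) : ℝ := T.d (T.closest l v) v

/-- The weight of the branch of the vertex `q` with respect to the path with
vertex sequence `l`: the total weight of all vertices whose closest vertex on
the path is `q`. -/
def wBranch (l : List V) (q : V) : ℝ :=
  ∑ v ∈ Finset.univ.filter (fun v => T.closest l v = q), T.w v

/-- `w(T)`: total weight of the tree. -/
def wT : ℝ := ∑ v, T.w v

/-- `d̄_P(û,p) = ∑_j w_{T_{p(j)}} d(p(j), p)` for the path with vertex sequence `l`. -/
def dbar (l : List V) (p : V) : ℝ := (l.map (fun q => T.wBranch l q * T.d q p)).sum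

/-- `s_p(P) = (1/vt) d̄_P(û,p)` for a vertex `p` of the path. -/
def sOn (l : List V) (p : V) : ℝ := (1 / T.vt) * T.dbar l p

/-- `s_i(P) = (1/vt) d̄_P(û,p(i))`, where `p(i)` is the closest vertex of the path to `v_i`. -/
def s (l : List V) (v : V) : ℝ := T.sOn l (T.closest l v)

/-- Mean service time `S̄(P)`. -/
def Sbar (l : List V) : ℝ := ∑ v, T.w v * T.s l v

/-- Second moment `S̄²(P)` of the service time. -/
def S2bar (l : List V) : ℝ := ∑ v, T.w v * (T.s l v) ^ 2

/-- `T̄1(P) = (1/vt) ∑ w_i d(P, v_i)`. -/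
def T1 (l : List V) : ℝ := (1 / T.vt) * ∑ v, T.w v * T.dP l v

/-- `T̄2(P) = (1/vt) ∑ w_i d̄_P(û, p(i))`. -/
def T2 (l : List V) : ℝ := (1 / T.vt) * ∑ v, T.w v * T.dbar l (T.closest l v)

/-- The M/G/1 queueing delay `Q̄(P)`, valued in `[0,∞]`. -/
def Qbar (lam : ℝ) (l : List V) : ℝ≥0∞ :=
  if 0 < 1 - lam * T.Sbar l then
    ENNReal.ofReal (lam * T.S2bar l / (2 * (1 - lam * T.Sbar l)))
  else ⊤

/-- The M/G/1 queueing delay `Q̄(P)` as an extended real. -/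
def QbarE (lam : ℝ) (l : List V) : EReal :=
  if 0 < 1 - lam * T.Sbar l then
    ((lam * T.S2bar l / (2 * (1 - lam * T.Sbar l)) : ℝ) : EReal)
  else ⊤

/-- `|P|`: the total length of the path `P`. -/
def plen {a b : V} (P : T.G.Walk a b) : ℝ := (P.edges.map T.len).sum

/-- The objective `F(P) = α1·|P| + α2·(β·(Q̄(P)+T̄2(P)) + (1-β)·T̄1(P))`. -/
def F (α1 α2 β lam : ℝ) {a b : V} (P : T.G.Walk a b) : EReal :=
  ((α1 * T.plen P : ℝ) : EReal) +
    (α2 : EReal) *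
      ((β : EReal) * (T.QbarE lam P.support + ((T.T2 P.support : ℝ) : EReal)) +
        (((1 - β) * T.T1 P.support : ℝ) : EReal))

end WeightedTree


namespace WeightedTree

set_option linter.unusedSectionVars false

variable {V : Type*} [Fintype V] [DecidableEq V] (T : WeightedTree V)

-- auxiliary development
def pth (x y : V) : T.G.Walk x y := (T.isTree.existsUnique_path x y).choose

lemma pth_isPath (x y : V) : (T.pth x y).IsPath := (T.isTree.existsUnique_path x y).choose_spec.1

lemma pth_eq {x y : V} (p : T.G.Walk x y) (hp : p.IsPath) : T.pth x y = p :=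
  ((T.isTree.existsUnique_path x y).choose_spec.2 p hp).symm

lemma d_eq {x y : V} (p : T.G.Walk x y) (hp : p.IsPath) :
    T.d x y = (p.edges.map T.len).sum := by
  rw [d, show (T.isTree.existsUnique_path x y).choose = T.pth x y from rfl, T.pth_eq p hp]

lemma d_self (x : V) : T.d x x = 0 := by
  rw [T.d_eq SimpleGraph.Walk.nil SimpleGraph.Walk.IsPath.nil]; simp

lemma d_symm (x y : V) : T.d x y = T.d y x := by
  rw [T.d_eq (T.pth x y) (T.pth_isPath x y),
    T.d_eq (T.pth x y).reverse (T.pth_isPath x y).reverse,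
    SimpleGraph.Walk.edges_reverse, List.map_reverse, List.sum_reverse]

lemma d_nonneg (x y : V) : 0 ≤ T.d x y := by
  rw [d]
  refine List.sum_nonneg ?_
  intro a ha
  obtain ⟨e, he, rfl⟩ := List.mem_map.mp ha
  exact le_of_lt (T.len_pos e (SimpleGraph.Walk.edges_subset_edgeSet _ he))

lemma d_pos {x y : V} (h : x ≠ y) : 0 < T.d x y := by
  rw [T.d_eq (T.pth x y) (T.pth_isPath x y)]
  cases hp : T.pth x y with
  | nil => exact absurd rfl h
  | cons hadj q =>
    refine List.sum_pos _ ?_ (by simp [hp])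
    intro a ha
    obtain ⟨e, he, rfl⟩ := List.mem_map.mp ha
    exact T.len_pos e (SimpleGraph.Walk.edges_subset_edgeSet (SimpleGraph.Walk.cons hadj q) he)

lemma eq_of_d_le_zero {x y : V} (h : T.d x y ≤ 0) : x = y := by
  by_contra hne
  exact absurd h (not_le.mpr (T.d_pos hne)).elim

lemma d_add_of_mem {x z : V} (p : T.G.Walk x z) (hp : p.IsPath) {y : V}
    (hy : y ∈ p.support) : T.d x z = T.d x y + T.d y z := by
  have h1 : T.d x z = (List.map T.len ((p.takeUntil y hy).append (p.dropUntil y hy)).edges).sum := by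
    rw [p.take_spec hy]; exact T.d_eq p hp
  rw [h1, SimpleGraph.Walk.edges_append, List.map_append, List.sum_append,
    T.d_eq _ (hp.takeUntil hy), T.d_eq _ (hp.dropUntil hy)]


lemma isPath_append {x y z : V} {p : T.G.Walk x y} {q : T.G.Walk y z}
    (hp : p.IsPath) (hq : q.IsPath)
    (h : ∀ a, a ∈ p.support → a ∈ q.support → a = y) : (p.append q).IsPath := by
  rw [SimpleGraph.Walk.isPath_def, SimpleGraph.Walk.support_append, List.nodup_append]
  refine ⟨hp.support_nodup, ?_, ?_⟩
  · have := hq.support_nodup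
    rw [q.support_eq_cons] at this
    exact this.of_cons
  · rintro a ha _ ha' rfl
    have hay : a = y := h a ha (List.mem_of_mem_tail ha')
    subst hay
    have := hq.support_nodup
    rw [q.support_eq_cons] at this
    exact (List.nodup_cons.mp this).1 ha'

/-- The unique path between two vertices of a path `p` stays inside `p`. -/
lemma pth_support_subset {a b q g : V} (p : T.G.Walk a b) (hp : p.IsPath)
    (hq : q ∈ p.support) (hg : g ∈ p.support) :
    (T.pth q g).support ⊆ p.support := by
  by_cases hg' : g ∈ (p.dropUntil q hq).support
  · have hseg : T.pth q g = (p.dropUntil q hq).takeUntil g hg' :=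
      T.pth_eq _ ((hp.dropUntil hq).takeUntil hg')
    rw [hseg]
    exact fun x hx => (p.support_dropUntil_subset hq)
      ((p.dropUntil q hq).support_takeUntil_subset hg' hx)
  · have hg'' : g ∈ (p.takeUntil q hq).support := by
      have := p.take_spec hq
      have hmem : g ∈ ((p.takeUntil q hq).append (p.dropUntil q hq)).support := by
        rw [this]; exact hg
      rw [SimpleGraph.Walk.mem_support_append_iff] at hmem
      exact hmem.resolve_right hg'
    have hseg : T.pth q g = ((p.takeUntil q hq).dropUntil g hg'').reverse :=
      T.pth_eq _ ((hp.takeUntil hq).dropUntil hg'').reverse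
    rw [hseg]
    intro x hx
    rw [SimpleGraph.Walk.support_reverse, List.mem_reverse] at hx
    exact (p.support_takeUntil_subset hq)
      (((p.takeUntil q hq).support_dropUntil_subset hg'') hx)

/-- Gate property: the minimiser of distance to `v` on a path is a gate. -/
lemma exists_gate {a b : V} (p : T.G.Walk a b) (hp : p.IsPath) (v : V) :
    ∃ g ∈ p.support, ∀ q ∈ p.support, T.d q v = T.d q g + T.d g v := by
  have hne : p.support.toFinset.Nonempty := by
    simp [SimpleGraph.Walk.support_ne_nil p, List.toFinset_eq_empty_iff,
      ← Finset.nonempty_iff_ne_empty]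
  obtain ⟨g, hg, hmin⟩ := p.support.toFinset.exists_min_image (fun q => T.d q v) hne
  rw [List.mem_toFinset] at hg
  refine ⟨g, hg, ?_⟩
  have hRP : ∀ x ∈ (T.pth g v).support, x ∈ p.support → x = g := by
    intro x hxR hxp
    have h1 : T.d g v = T.d g x + T.d x v := T.d_add_of_mem _ (T.pth_isPath g v) hxR
    have h2 : T.d g v ≤ T.d x v := hmin x (List.mem_toFinset.mpr hxp)
    have : T.d g x ≤ 0 := by linarith
    exact T.eq_of_d_le_zero ((T.d_symm x g).le.trans this)
  intro q hq
  have hsub := T.pth_support_subset p hp hq hg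
  have hW : ((T.pth q g).append (T.pth g v)).IsPath := by
    refine T.isPath_append (T.pth_isPath q g) (T.pth_isPath g v) ?_
    intro x hx hx'
    exact hRP x hx' (hsub hx)
  rw [T.d_eq _ hW, SimpleGraph.Walk.edges_append, List.map_append, List.sum_append,
    ← T.d_eq _ (T.pth_isPath q g), ← T.d_eq _ (T.pth_isPath g v)]


lemma gate_unique {l : List V} {v g₁ g₂ : V} (h₁ : g₁ ∈ l) (h₂ : g₂ ∈ l)
    (hg₁ : ∀ q ∈ l, T.d q v = T.d q g₁ + T.d g₁ v)
    (hg₂ : ∀ q ∈ l, T.d q v = T.d q g₂ + T.d g₂ v) : g₁ = g₂ := by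
  have e1 := hg₁ g₂ h₂
  have e2 := hg₂ g₁ h₁
  have h12 : T.d g₁ g₂ = T.d g₂ g₁ := T.d_symm _ _
  have : T.d g₁ g₂ ≤ 0 := by linarith
  exact T.eq_of_d_le_zero this

/-- The `closest` vertex on a path is a gate. -/
lemma closest_gate {a b : V} (p : T.G.Walk a b) (hp : p.IsPath) (v : V) :
    T.closest p.support v ∈ p.support ∧
      ∀ q ∈ p.support, T.d q v = T.d q (T.closest p.support v) + T.d (T.closest p.support v) v := by
  obtain ⟨g, hg, hgate⟩ := T.exists_gate p hp v
  have hex : ∃ u ∈ p.support, ∀ u' ∈ p.support, T.d u v ≤ T.d u' v := by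
    refine ⟨g, hg, fun q hq => ?_⟩
    have := hgate q hq
    have := T.d_nonneg q g
    linarith
  rw [closest, dif_pos hex]
  obtain ⟨hc1, hc2⟩ := hex.choose_spec
  have hcg : hex.choose = g := by
    have e1 := hgate hex.choose hc1
    have e2 := hc2 g hg
    have : T.d hex.choose g ≤ 0 := by linarith
    exact T.eq_of_d_le_zero this
  rw [hcg]
  exact ⟨hg, hgate⟩



lemma edge_walk_isPath {b u : V} {a : V} (P : T.G.Walk a b) (hadj : T.G.Adj b u)
    (hu : u ∉ P.support) : (SimpleGraph.Walk.cons hadj SimpleGraph.Walk.nil).IsPath := by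
  rw [SimpleGraph.Walk.cons_isPath_iff]
  refine ⟨SimpleGraph.Walk.IsPath.nil, ?_⟩
  simp only [SimpleGraph.Walk.support_nil, List.mem_singleton]
  rintro rfl
  exact hu P.end_mem_support

lemma d_edge {a b u : V} (P : T.G.Walk a b) (hadj : T.G.Adj b u) (hu : u ∉ P.support) :
    T.d b u = T.len s(b, u) := by
  rw [T.d_eq _ (T.edge_walk_isPath P hadj hu)]
  simp

lemma concat_isPath {a b u : V} (P : T.G.Walk a b) (hP : P.IsPath) (hadj : T.G.Adj b u)
    (hu : u ∉ P.support) : (P.concat hadj).IsPath := by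
  rw [SimpleGraph.Walk.concat_eq_append]
  refine T.isPath_append hP (T.edge_walk_isPath P hadj hu) ?_
  intro x hx hx'
  simp only [SimpleGraph.Walk.support_cons, SimpleGraph.Walk.support_nil, List.mem_cons,
    List.mem_singleton, List.not_mem_nil, or_false] at hx'
  rcases hx' with rfl | rfl
  · rfl
  · exact absurd hx hu

lemma concat_support {a b u : V} (P : T.G.Walk a b) (hadj : T.G.Adj b u) :
    (P.concat hadj).support = P.support ++ [u] := by
  rw [SimpleGraph.Walk.support_concat]

lemma d_to_u {a b u : V} (P : T.G.Walk a b) (hP : P.IsPath) (hadj : T.G.Adj b u)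
    (hu : u ∉ P.support) {q : V} (hq : q ∈ P.support) : T.d q u = T.d q b + T.d b u := by
  have hW : ((T.pth q b).append (SimpleGraph.Walk.cons hadj SimpleGraph.Walk.nil)).IsPath := by
    refine T.isPath_append (T.pth_isPath q b) (T.edge_walk_isPath P hadj hu) ?_
    intro x hx hx'
    simp only [SimpleGraph.Walk.support_cons, SimpleGraph.Walk.support_nil, List.mem_cons,
      List.mem_singleton, List.not_mem_nil, or_false] at hx'
    rcases hx' with rfl | rfl
    · rfl
    · exact absurd (T.pth_support_subset P hP hq P.end_mem_support hx) hu
  rw [T.d_eq _ hW, SimpleGraph.Walk.edges_append, List.map_append, List.sum_append,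
    ← T.d_eq _ (T.pth_isPath q b)]
  simp [← T.d_edge P hadj hu]

lemma closest_u {a b u : V} (P : T.G.Walk a b) (hP : P.IsPath) (hadj : T.G.Adj b u)
    (hu : u ∉ P.support) : T.closest P.support u = b := by
  obtain ⟨hc1, hc2⟩ := T.closest_gate P hP u
  have e1 := hc2 b P.end_mem_support
  have e2 := T.d_to_u P hP hadj hu hc1
  have h3 : T.d b (T.closest P.support u) = T.d (T.closest P.support u) b := T.d_symm _ _
  have : T.d b (T.closest P.support u) ≤ 0 := by linarith
  exact (T.eq_of_d_le_zero this).symm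

lemma closest_concat_eq_u {a b u : V} (P : T.G.Walk a b) (hP : P.IsPath) (hadj : T.G.Adj b u)
    (hu : u ∉ P.support) {v : V} (h : T.closest (P.concat hadj).support v = u) :
    T.closest P.support v = b := by
  obtain ⟨hc1', hc2'⟩ := T.closest_gate (P.concat hadj) (T.concat_isPath P hP hadj hu) v
  rw [h] at hc2'
  obtain ⟨hc1, hc2⟩ := T.closest_gate P hP v
  have hsub : ∀ q ∈ P.support, q ∈ (P.concat hadj).support := by
    intro q hq; rw [T.concat_support P hadj]; exact List.mem_append_left _ hq
  have hbgate : ∀ q ∈ P.support, T.d q v = T.d q b + T.d b v := by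
    intro q hq
    have e1 := hc2' q (hsub q hq)
    have e2 := hc2' b (hsub b P.end_mem_support)
    have e3 := T.d_to_u P hP hadj hu hq
    linarith [T.d_self b]
  exact T.gate_unique hc1 P.end_mem_support hc2 hbgate

lemma closest_concat_ne_u {a b u : V} (P : T.G.Walk a b) (hP : P.IsPath) (hadj : T.G.Adj b u)
    (hu : u ∉ P.support) {v : V} (h : T.closest (P.concat hadj).support v ≠ u) :
    T.closest (P.concat hadj).support v = T.closest P.support v := by
  obtain ⟨hc1', hc2'⟩ := T.closest_gate (P.concat hadj) (T.concat_isPath P hP hadj hu) v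
  obtain ⟨hc1, hc2⟩ := T.closest_gate P hP v
  have h0 : T.closest (P.concat hadj).support v ∈ P.support ++ [u] := by
    rw [← T.concat_support P hadj]; exact hc1'
  have hmem : T.closest (P.concat hadj).support v ∈ P.support := by
    rcases List.mem_append.mp h0 with h' | h'
    · exact h'
    · simp only [List.mem_singleton] at h'; exact absurd h' h
  have hsub : ∀ q ∈ P.support, q ∈ (P.concat hadj).support := by
    intro q hq; rw [T.concat_support P hadj]; exact List.mem_append_left _ hq
  exact T.gate_unique hmem hc1 (fun q hq => hc2' q (hsub q hq)) hc2


lemma dbar_closest (l : List V) (hl : l.Nodup) (hcl : ∀ v, T.closest l v ∈ l) (p : V) :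
    T.dbar l p = ∑ v', T.w v' * T.d (T.closest l v') p := by
  rw [dbar, ← List.sum_toFinset (fun q => T.wBranch l q * T.d q p) hl]
  have h1 : ∀ q ∈ l.toFinset, T.wBranch l q * T.d q p
      = ∑ v' ∈ Finset.univ.filter (fun v' => T.closest l v' = q), T.w v' * T.d (T.closest l v') p := by
    intro q hq
    rw [wBranch, Finset.sum_mul]
    refine Finset.sum_congr rfl ?_
    intro v' hv'
    rw [(Finset.mem_filter.mp hv').2]
  rw [Finset.sum_congr rfl h1,
    Finset.sum_fiberwise_of_maps_to (fun v _ => List.mem_toFinset.mpr (hcl v))]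

lemma vt_mul_Sbar (l : List V) (hl : l.Nodup) (hcl : ∀ v, T.closest l v ∈ l) :
    T.vt * T.Sbar l
      = ∑ v, ∑ v', T.w v * T.w v' * T.d (T.closest l v') (T.closest l v) := by
  have hvt := T.vt_pos.ne'
  simp only [Sbar, s, sOn, T.dbar_closest l hl hcl, Finset.mul_sum]
  refine Finset.sum_congr rfl fun v _ => Finset.sum_congr rfl fun v' _ => ?_
  field_simp

end WeightedTree

/-- extending a path `P` by an adjacent vertex `u` increases the mean
service time by `(2/vt)·w_{T_u}·(w(T) − w_{T_u})·d(P,u)`. -/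
theorem sbar_concat {V : Type*} [Fintype V] [DecidableEq V] (T : WeightedTree V)
    {a b u : V} (P : T.G.Walk a b) (hP : P.IsPath)
    (hadj : T.G.Adj b u) (hu : u ∉ P.support) :
    T.Sbar (P.concat hadj).support =
      T.Sbar P.support +
        (2 / T.vt) * T.wBranch (P.concat hadj).support u *
          (T.wT - T.wBranch (P.concat hadj).support u) * T.dP P.support u := by
  classical
  set P' := P.concat hadj with hP'def
  have hP' : P'.IsPath := T.concat_isPath P hP hadj hu
  set l := P.support
  set l' := P'.support with hl'def
  have hvt : T.vt ≠ 0 := T.vt_pos.ne'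
  have hcl : ∀ v, T.closest l v ∈ l := fun v => (T.closest_gate P hP v).1
  have hcl' : ∀ v, T.closest l' v ∈ l' := fun v => (T.closest_gate P' hP' v).1
  -- abbreviations
  set χ : V → ℝ := fun v => if T.closest l' v = u then 1 else 0 with hχ
  set Wu := T.wBranch l' u with hWu
  set dbu := T.d b u with hdbu
  -- the branch weight as a sum
  have hWu_sum : Wu = ∑ v, T.w v * χ v := by
    rw [hWu, WeightedTree.wBranch, Finset.sum_filter]
    refine Finset.sum_congr rfl ?_
    intro v _
    by_cases h : T.closest l' v = u <;> simp [hχ, h]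
  have hwT : T.wT = ∑ v, T.w v := rfl
  have hW1_sum : T.wT - Wu = ∑ v, T.w v * (1 - χ v) := by
    rw [hwT, hWu_sum, ← Finset.sum_sub_distrib]
    refine Finset.sum_congr rfl ?_
    intro v _
    ring
  -- distance to the path
  have hdP : T.dP l u = dbu := by
    rw [WeightedTree.dP, T.closest_u P hP hadj hu]
  -- the key pointwise identity
  have key : ∀ v v', T.d (T.closest l' v') (T.closest l' v)
      = T.d (T.closest l v') (T.closest l v)
        + (χ v * (1 - χ v') + χ v' * (1 - χ v)) * dbu := by
    intro v v'
    by_cases h1 : T.closest l' v = u <;> by_cases h2 : T.closest l' v' = u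
    · have e1 := T.closest_concat_eq_u P hP hadj hu h1
      have e2 := T.closest_concat_eq_u P hP hadj hu h2
      rw [h1, h2, e1, e2, T.d_self, T.d_self]
      simp [hχ, h1, h2]
    · have e1 := T.closest_concat_eq_u P hP hadj hu h1
      have e2 := T.closest_concat_ne_u P hP hadj hu h2
      rw [h1, e1, e2]
      have hmem : T.closest l v' ∈ l := hcl v'
      have := T.d_to_u P hP hadj hu hmem
      rw [this]
      simp [hχ, h1, h2]; rfl
    · have e1 := T.closest_concat_ne_u P hP hadj hu h1
      have e2 := T.closest_concat_eq_u P hP hadj hu h2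
      rw [h2, e1, e2]
      have hmem : T.closest l v ∈ l := hcl v
      rw [T.d_symm u (T.closest l v), T.d_to_u P hP hadj hu hmem,
        T.d_symm b (T.closest l v)]
      simp [hχ, h1, h2]; rfl
    · have e1 := T.closest_concat_ne_u P hP hadj hu h1
      have e2 := T.closest_concat_ne_u P hP hadj hu h2
      rw [e1, e2]
      simp [hχ, h1, h2]; rfl
  -- sum identities
  have hS := T.vt_mul_Sbar l hP.support_nodup hcl
  have hS' := T.vt_mul_Sbar l' hP'.support_nodup hcl'
  have hsum : T.vt * T.Sbar l' = T.vt * T.Sbar l + (Wu * (T.wT - Wu) + (T.wT - Wu) * Wu) * dbu := by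
    rw [hS', hS]
    have expand : ∀ v v', T.w v * T.w v' * T.d (T.closest l' v') (T.closest l' v)
        = T.w v * T.w v' * T.d (T.closest l v') (T.closest l v)
          + ((T.w v * χ v) * (T.w v' * (1 - χ v')) + (T.w v * (1 - χ v)) * (T.w v' * χ v')) * dbu := by
      intro v v'
      rw [key v v']
      ring
    simp only [expand]
    rw [Finset.sum_congr rfl (fun v _ => Finset.sum_add_distrib)]
    rw [Finset.sum_add_distrib]
    congr 1
    have inner : ∀ v : V, (∑ v', ((T.w v * χ v) * (T.w v' * (1 - χ v'))
          + (T.w v * (1 - χ v)) * (T.w v' * χ v')) * dbu)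
        = ((T.w v * χ v) * (T.wT - Wu) + (T.w v * (1 - χ v)) * Wu) * dbu := by
      intro v
      rw [← Finset.sum_mul]
      congr 1
      rw [Finset.sum_add_distrib, ← Finset.mul_sum, ← Finset.mul_sum, ← hW1_sum, ← hWu_sum]
    rw [Finset.sum_congr rfl (fun v _ => inner v), ← Finset.sum_mul]
    congr 1
    rw [Finset.sum_add_distrib, ← Finset.sum_mul, ← Finset.sum_mul, ← hW1_sum, ← hWu_sum]
  -- conclude
  have goal' : T.vt * T.Sbar l' = T.vt * (T.Sbar l
      + 2 / T.vt * T.wBranch l' u * (T.wT - T.wBranch l' u) * T.dP l u) := by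
    rw [hsum, hdP, ← hWu]
    field_simp
    ring
  exact mul_left_cancel₀ hvt goal'
end
end

section
/- If P and P' are paths in T such that P is a subpath of P' (P ⊆ P'), then Q̄(P) ≤ Q̄(P'), where Q̄ takes values in [0,∞]. -/
open scoped ENNReal

noncomputable section

namespace WeightedTree

variable {V : Type*} [Fintype V] [DecidableEq V] (T : WeightedTree V)

lemma sum_len_nonneg {x y : V} (p : T.G.Walk x y) : 0 ≤ (p.edges.map T.len).sum := by
  apply List.sum_nonneg
  intro a ha
  obtain ⟨e, he, rfl⟩ := List.mem_map.1 ha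
  exact (T.len_pos e (p.edges_subset_edgeSet he)).le

lemma eq_of_d_eq_zero {x y : V} (h : T.d x y = 0) : x = y := by
  have hs := (T.isTree.existsUnique_path x y).choose_spec
  rw [T.d_eq _ hs.1] at h
  cases hp : (T.isTree.existsUnique_path x y).choose with
  | nil => rfl
  | cons h' q =>
      exfalso
      rw [hp] at h
      simp only [SimpleGraph.Walk.edges_cons, List.map_cons, List.sum_cons] at h
      have h1 := T.len_pos _ (T.G.mem_edgeSet.mpr h')
      have h2 := T.sum_len_nonneg q
      linarith

lemma d_split {x y z : V} (p : T.G.Walk x y) (hp : p.IsPath) (hz : z ∈ p.support) :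
    T.d x y = T.d x z + T.d z y := by
  have h2 : ((p.takeUntil z hz).append (p.dropUntil z hz)).edges = p.edges := by
    rw [SimpleGraph.Walk.take_spec]
  rw [SimpleGraph.Walk.edges_append] at h2
  rw [T.d_eq p hp, ← h2, T.d_eq _ (hp.takeUntil hz), T.d_eq _ (hp.dropUntil hz),
    List.map_append, List.sum_append]

lemma sum_map_le_of_nodup_subset {α : Type*} [DecidableEq α] (f : α → ℝ) (L M : List α)
    (hnd : L.Nodup) (hsub : L ⊆ M) (hf : ∀ e ∈ M, 0 ≤ f e) :
    (L.map f).sum ≤ (M.map f).sum := by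
  have hle : (L : Multiset α) ≤ (M : Multiset α) := by
    rw [Multiset.le_iff_count]
    intro a
    by_cases ha : a ∈ L
    · have h1 : (L : Multiset α).count a ≤ 1 := by
        simpa using List.nodup_iff_count_le_one.1 hnd a
      have h2 : 1 ≤ (M : Multiset α).count a := by
        simpa using List.count_pos_iff.2 (hsub ha)
      omega
    · simp [List.count_eq_zero_of_not_mem ha]
  obtain ⟨u, hu⟩ := Multiset.le_iff_exists_add.1 hle
  have h3 : ((M : Multiset α).map f).sum = ((L : Multiset α).map f).sum + (u.map f).sum := by
    rw [hu, Multiset.map_add, Multiset.sum_add]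
  have h4 : 0 ≤ (u.map f).sum := by
    apply Multiset.sum_nonneg
    intro z hz
    obtain ⟨e, he, rfl⟩ := Multiset.mem_map.1 hz
    exact hf e (by rw [← Multiset.mem_coe, hu]; exact Multiset.mem_add.2 (Or.inr he))
  have h5 : ((L : Multiset α).map f).sum = (L.map f).sum := by simp
  have h6 : ((M : Multiset α).map f).sum = (M.map f).sum := by simp
  linarith

lemma d_triangle (x y z : V) : T.d x z ≤ T.d x y + T.d y z := by
  have hxy := (T.isTree.existsUnique_path x y).choose_spec
  have hyz := (T.isTree.existsUnique_path y z).choose_spec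
  set p := (T.isTree.existsUnique_path x y).choose
  set q := (T.isTree.existsUnique_path y z).choose
  have hW : T.d x z = ((p.append q).bypass.edges.map T.len).sum :=
    T.d_eq _ (p.append q).bypass_isPath
  have hsub := (p.append q).edges_bypass_subset
  have hnd : (p.append q).bypass.edges.Nodup :=
    ((p.append q).bypass_isPath).isTrail.edges_nodup
  have hle := sum_map_le_of_nodup_subset T.len _ _ hnd hsub
    (fun e he => (T.len_pos e ((p.append q).edges_subset_edgeSet he)).le)
  rw [hW, T.d_eq p hxy.1, T.d_eq q hyz.1]
  calc ((p.append q).bypass.edges.map T.len).sum ≤ (((p.append q)).edges.map T.len).sum := hle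
    _ = (p.edges.map T.len).sum + (q.edges.map T.len).sum := by
        rw [SimpleGraph.Walk.edges_append, List.map_append, List.sum_append]

lemma closest_spec {l : List V} (hl : l ≠ []) (v : V) :
    T.closest l v ∈ l ∧ ∀ u ∈ l, T.d (T.closest l v) v ≤ T.d u v := by
  have h : ∃ u ∈ l, ∀ u' ∈ l, T.d u v ≤ T.d u' v := by
    obtain ⟨x, hx⟩ := List.exists_mem_of_ne_nil l hl
    obtain ⟨u, hu, hmin⟩ := l.toFinset.exists_min_image (fun u => T.d u v)
      ⟨x, List.mem_toFinset.2 hx⟩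
    exact ⟨u, List.mem_toFinset.1 hu, fun u' hu' => hmin u' (List.mem_toFinset.2 hu')⟩
  rw [closest, dif_pos h]
  exact h.choose_spec

lemma exists_path_support_subset {a b : V} (p : T.G.Walk a b) (hp : p.IsPath)
    {u c : V} (hu : u ∈ p.support) (hc : c ∈ p.support) :
    ∃ q : T.G.Walk u c, q.IsPath ∧ q.support ⊆ p.support := by
  by_cases h : c ∈ (p.dropUntil u hu).support
  · exact ⟨(p.dropUntil u hu).takeUntil c h, (hp.dropUntil hu).takeUntil h,
      fun x hx => p.support_dropUntil_subset hu
        ((p.dropUntil u hu).support_takeUntil_subset h hx)⟩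
  · have hc' : c ∈ (p.takeUntil u hu).support := by
      have hsp : p.support = (p.takeUntil u hu).support ++ (p.dropUntil u hu).support.tail := by
        conv_lhs => rw [← SimpleGraph.Walk.take_spec p hu]
        rw [SimpleGraph.Walk.support_append]
      rw [hsp] at hc
      rcases List.mem_append.1 hc with h1 | h1
      · exact h1
      · exact absurd (List.tail_subset _ h1) h
    refine ⟨((p.takeUntil u hu).dropUntil c hc').reverse,
      ((hp.takeUntil hu).dropUntil hc').reverse, fun x hx => ?_⟩
    rw [SimpleGraph.Walk.support_reverse, List.mem_reverse] at hx
    exact p.support_takeUntil_subset hu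
      ((p.takeUntil u hu).support_dropUntil_subset hc' hx)

lemma gate {a b : V} (p : T.G.Walk a b) (hp : p.IsPath) (v : V)
    {u : V} (hu : u ∈ p.support) :
    T.d u v = T.d u (T.closest p.support v) + T.d (T.closest p.support v) v := by
  obtain ⟨hcl, hmin⟩ := T.closest_spec p.support_ne_nil v
  set c := T.closest p.support v with hc
  have hR := (T.isTree.existsUnique_path c v).choose_spec
  set R := (T.isTree.existsUnique_path c v).choose with hRdef
  have hRonce : ∀ w ∈ R.support, w ∈ p.support → w = c := by
    intro w hwR hwP
    have hsplit := T.d_split R hR.1 hwR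
    have h1 := hmin w hwP
    have h2 : T.d c w ≤ 0 := by
      have := T.d_nonneg w v
      linarith [T.d_eq R hR.1 ▸ hsplit]
    exact (T.eq_of_d_eq_zero (le_antisymm h2 (T.d_nonneg _ _))).symm
  obtain ⟨S, hS, hSsub⟩ := T.exists_path_support_subset p hp hu hcl
  have happ : (S.append R).IsPath := by
    rw [SimpleGraph.Walk.isPath_def, SimpleGraph.Walk.support_append, List.nodup_append]
    refine ⟨hS.support_nodup, ?_, ?_⟩
    · have := hR.1.support_nodup
      rw [R.support_eq_cons] at this
      exact (List.nodup_cons.1 this).2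
    · rintro x hx1 _ hx2 rfl
      have hxR : x ∈ R.support := List.tail_subset _ hx2
      have hxc : x = c := hRonce x hxR (hSsub hx1)
      have := hR.1.support_nodup
      rw [R.support_eq_cons] at this
      exact (List.nodup_cons.1 this).1 (hxc ▸ hx2)
  rw [T.d_eq (S.append R) happ, SimpleGraph.Walk.edges_append, List.map_append,
    List.sum_append, ← T.d_eq S hS, ← T.d_eq R hR.1]

lemma closest_lipschitz {a b : V} (p : T.G.Walk a b) (hp : p.IsPath) (x y : V) :
    T.d (T.closest p.support x) (T.closest p.support y) ≤ T.d x y := by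
  obtain ⟨hxm, _⟩ := T.closest_spec p.support_ne_nil x
  obtain ⟨hym, _⟩ := T.closest_spec p.support_ne_nil y
  set px := T.closest p.support x
  set py := T.closest p.support y
  have h1 := T.gate p hp x hym
  have h2 := T.gate p hp y hxm
  have t1 := T.d_triangle py y x
  have t2 := T.d_triangle px x y
  have s1 := T.d_symm py px
  have s2 := T.d_symm y x
  linarith

lemma closest_closest {a b a' b' : V} (P : T.G.Walk a b) (hP : P.IsPath)
    (P' : T.G.Walk a' b') (hP' : P'.IsPath) (hsub : P.support ⊆ P'.support) (v : V) :
    T.closest P.support v = T.closest P.support (T.closest P'.support v) := by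
  obtain ⟨hym, _⟩ := T.closest_spec P'.support_ne_nil v
  obtain ⟨hcvm, hcvmin⟩ := T.closest_spec P.support_ne_nil v
  obtain ⟨hcym, hcymin⟩ := T.closest_spec P.support_ne_nil (T.closest P'.support v)
  set y := T.closest P'.support v
  set cv := T.closest P.support v
  set cy := T.closest P.support y
  have e1 := T.gate P' hP' v (hsub hcvm)
  have e2 := T.gate P' hP' v (hsub hcym)
  have hmin1 := hcvmin cy hcym
  have h1 : T.d cv y ≤ T.d cy y := by linarith
  have h2 : T.d cy y ≤ T.d cv y := hcymin cv hcvm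
  have g := T.gate P hP y hcvm
  have hz : T.d cv cy = 0 := by linarith
  exact T.eq_of_d_eq_zero hz

lemma d_closest_mono {a b a' b' : V} (P : T.G.Walk a b) (hP : P.IsPath)
    (P' : T.G.Walk a' b') (hP' : P'.IsPath) (hsub : P.support ⊆ P'.support) (u v : V) :
    T.d (T.closest P.support u) (T.closest P.support v)
      ≤ T.d (T.closest P'.support u) (T.closest P'.support v) := by
  rw [T.closest_closest P hP P' hP' hsub u, T.closest_closest P hP P' hP' hsub v]
  exact T.closest_lipschitz P hP _ _

lemma dbar_eq {l : List V} (hl : l ≠ []) (hnd : l.Nodup) (p : V) :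
    T.dbar l p = ∑ v, T.w v * T.d (T.closest l v) p := by
  rw [dbar, ← List.sum_toFinset _ hnd]
  rw [← Finset.sum_fiberwise_of_maps_to (g := fun v => T.closest l v) (t := l.toFinset)
    (fun x _ => List.mem_toFinset.2 (T.closest_spec hl x).1)
    (fun v => T.w v * T.d (T.closest l v) p)]
  apply Finset.sum_congr rfl
  intro q _
  rw [wBranch, Finset.sum_mul]
  apply Finset.sum_congr rfl
  intro v hv
  rw [(Finset.mem_filter.1 hv).2]

lemma s_eq {l : List V} (hl : l ≠ []) (hnd : l.Nodup) (v : V) :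
    T.s l v = (1 / T.vt) * ∑ u, T.w u * T.d (T.closest l u) (T.closest l v) := by
  rw [s, sOn, T.dbar_eq hl hnd]

lemma s_nonneg {l : List V} (hl : l ≠ []) (hnd : l.Nodup) (v : V) : 0 ≤ T.s l v := by
  rw [T.s_eq hl hnd]
  apply mul_nonneg (one_div_nonneg.2 T.vt_pos.le)
  apply Finset.sum_nonneg
  intro u _
  exact mul_nonneg (T.w_nonneg u) (T.d_nonneg _ _)

lemma s_mono {a b a' b' : V} (P : T.G.Walk a b) (hP : P.IsPath)
    (P' : T.G.Walk a' b') (hP' : P'.IsPath) (hsub : P.support ⊆ P'.support) (v : V) :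
    T.s P.support v ≤ T.s P'.support v := by
  rw [T.s_eq P.support_ne_nil hP.support_nodup, T.s_eq P'.support_ne_nil hP'.support_nodup]
  apply mul_le_mul_of_nonneg_left _ (one_div_nonneg.2 T.vt_pos.le)
  apply Finset.sum_le_sum
  intro u _
  exact mul_le_mul_of_nonneg_left (T.d_closest_mono P hP P' hP' hsub u v) (T.w_nonneg u)


lemma Sbar_mono {a b a' b' : V} (P : T.G.Walk a b) (hP : P.IsPath)
    (P' : T.G.Walk a' b') (hP' : P'.IsPath) (hsub : P.support ⊆ P'.support) :
    T.Sbar P.support ≤ T.Sbar P'.support := by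
  apply Finset.sum_le_sum
  intro v _
  exact mul_le_mul_of_nonneg_left (T.s_mono P hP P' hP' hsub v) (T.w_nonneg v)

lemma S2bar_mono {a b a' b' : V} (P : T.G.Walk a b) (hP : P.IsPath)
    (P' : T.G.Walk a' b') (hP' : P'.IsPath) (hsub : P.support ⊆ P'.support) :
    T.S2bar P.support ≤ T.S2bar P'.support := by
  apply Finset.sum_le_sum
  intro v _
  apply mul_le_mul_of_nonneg_left _ (T.w_nonneg v)
  exact pow_le_pow_left₀ (T.s_nonneg P.support_ne_nil hP.support_nodup v)
    (T.s_mono P hP P' hP' hsub v) 2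

lemma S2bar_nonneg {a b : V} (P : T.G.Walk a b) (hP : P.IsPath) :
    0 ≤ T.S2bar P.support := by
  apply Finset.sum_nonneg
  intro v _
  exact mul_nonneg (T.w_nonneg v) (sq_nonneg _)

end WeightedTree

/-- if `P` is a subpath of `P'` then `Q̄(P) ≤ Q̄(P')`, where `Q̄` takes
values in `[0,∞]`. -/
theorem Qbar_monotone {V : Type*} [Fintype V] [DecidableEq V] (T : WeightedTree V)
    {a b a' b' : V} (P : T.G.Walk a b) (hP : P.IsPath)
    (P' : T.G.Walk a' b') (hP' : P'.IsPath)
    (hsub : P.support <:+: P'.support)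
    (lam : ℝ) (hlam : 0 < lam) :
    T.Qbar lam P.support ≤ T.Qbar lam P'.support := by
  have hsub' : P.support ⊆ P'.support := hsub.subset
  have hS := T.Sbar_mono P hP P' hP' hsub'
  have hS2 := T.S2bar_mono P hP P' hP' hsub'
  have hS2n := T.S2bar_nonneg P hP
  rw [WeightedTree.Qbar, WeightedTree.Qbar]
  by_cases h' : 0 < 1 - lam * T.Sbar P'.support
  · rw [if_pos h']
    have h : 0 < 1 - lam * T.Sbar P.support := by nlinarith
    rw [if_pos h]
    apply ENNReal.ofReal_le_ofReal
    apply div_le_div₀ (by nlinarith) (by nlinarith) (by linarith) (by nlinarith)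
  · rw [if_neg h']
    exact le_top
end
end

section
/- Fix k ≥ 2 and suppose all vertex weights are strictly positive and that for every j = 1,…,m−k+1 the subpath P_j := P_{j,j+k−1} has the same length l, i.e. d(p(j),p(j+k−1)) = l. Then the sequence S̄(P_1), S̄(P_2), …, S̄(P_{m−k+1}) is increasing–decreasing (unimodal): for every j with 1 ≤ j ≤ m−k−1, if S̄(P_j) > S̄(P_{j+1}) then S̄(P_{j+1}) > S̄(P_{j+2}). -/
open scoped ENNReal
set_option linter.unusedSectionVars false

noncomputable section

/-- The vertex sequence `p(a), p(a+1), …, p(b)` of the subpath `P_{a,b}` of the path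
with consecutive vertices `p(1), …, p(m)`. -/
def seg {V : Type*} (p : ℕ → V) (a b : ℕ) : List V :=
  (List.range (b + 1 - a)).map (fun i => p (a + i))


namespace WeightedTree
variable {V : Type*} [Fintype V] [DecidableEq V] (T : WeightedTree V)

def upath (x y : V) : T.G.Walk x y := (T.isTree.existsUnique_path x y).choose

lemma upath_isPath (x y : V) : (T.upath x y).IsPath :=
  (T.isTree.existsUnique_path x y).choose_spec.1

lemma upath_unique {x y : V} {Q : T.G.Walk x y} (hQ : Q.IsPath) : Q = T.upath x y :=
  (T.isTree.existsUnique_path x y).choose_spec.2 Q hQ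

lemma d_def (x y : V) : T.d x y = ((T.upath x y).edges.map T.len).sum := rfl

lemma d_eq_walk {x y : V} (Q : T.G.Walk x y) (hQ : Q.IsPath) :
    T.d x y = (Q.edges.map T.len).sum := by
  rw [d_def, ← T.upath_unique hQ]

lemma walk_len_nonneg {x y : V} (Q : T.G.Walk x y) : 0 ≤ (Q.edges.map T.len).sum := by
  apply List.sum_nonneg
  intro a ha
  obtain ⟨e, he, rfl⟩ := List.mem_map.1 ha
  exact (T.len_pos e (Q.edges_subset_edgeSet he)).le

lemma d_split_s12 {x y z : V} (h : z ∈ (T.upath x y).support) :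
    T.d x y = T.d x z + T.d z y := by
  have hP := T.upath_isPath x y
  have h1 : T.d x z = (((T.upath x y).takeUntil z h).edges.map T.len).sum :=
    T.d_eq_walk _ (hP.takeUntil h)
  have h2 : T.d z y = (((T.upath x y).dropUntil z h).edges.map T.len).sum :=
    T.d_eq_walk _ (hP.dropUntil h)
  have h3 := congrArg SimpleGraph.Walk.edges (SimpleGraph.Walk.take_spec (T.upath x y) h)
  rw [SimpleGraph.Walk.edges_append] at h3
  rw [h1, h2, d_def, ← h3, List.map_append, List.sum_append]

/-- dichotomy at an edge -/
lemma d_dichotomy {u u' : V} (hadj : T.G.Adj u u') (v : V)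
    (h : u ∉ (T.upath v u').support) : u' ∈ (T.upath v u).support := by
  by_contra h'
  have hQ : ((T.upath v u).concat hadj).IsPath := by
    apply SimpleGraph.Walk.IsPath.mk'
    rw [SimpleGraph.Walk.support_concat]
    refine List.Nodup.append (T.upath_isPath v u).support_nodup (List.nodup_singleton _) ?_
    intro a ha hb
    simp only [List.mem_singleton] at hb
    subst hb
    exact h' ha
  have heq := T.upath_unique hQ
  apply h
  rw [← heq, SimpleGraph.Walk.support_concat]
  exact List.mem_append.2 (Or.inl (SimpleGraph.Walk.end_mem_support _))

end WeightedTree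

-- Part 2: path machinery
namespace WeightedTree

variable {V : Type*} [Fintype V] [DecidableEq V] (T : WeightedTree V)

lemma upath_adj {u u' : V} (hadj : T.G.Adj u u') : (T.upath u u').support = [u, u'] := by
  have hQ : (SimpleGraph.Walk.cons hadj SimpleGraph.Walk.nil).IsPath := by
    apply SimpleGraph.Walk.IsPath.mk'
    simp [hadj.ne]
  rw [← T.upath_unique hQ]
  simp

/-- edge lengths along the path -/
def lam (p : ℕ → V) (i : ℕ) : ℝ := T.d (p i) (p (i+1))

/-- position of the i-th vertex -/
def tp (p : ℕ → V) (i : ℕ) : ℝ := ∑ s ∈ Finset.Icc 1 (i-1), T.lam p s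

variable {T} {p : ℕ → V} {m : ℕ}

lemma lam_nonneg (i : ℕ) : 0 ≤ T.lam p i := T.d_nonneg _ _

lemma tp_succ {i : ℕ} (h1 : 1 ≤ i) : T.tp p (i+1) = T.tp p i + T.lam p i := by
  unfold tp
  rw [show i + 1 - 1 = (i - 1) + 1 by omega,
    Finset.sum_Icc_succ_top (by omega : 1 ≤ i - 1 + 1), show i - 1 + 1 = i by omega]

lemma tp_mono {i j : ℕ} (h : i ≤ j) : T.tp p i ≤ T.tp p j := by
  unfold tp
  apply Finset.sum_le_sum_of_subset_of_nonneg
  · exact Finset.Icc_subset_Icc_right (by omega)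
  · exact fun s _ _ => lam_nonneg s

lemma tp_eq_Ico (x : ℕ) : T.tp p x = ∑ s ∈ Finset.Ico 1 x, T.lam p s := by
  unfold tp
  apply Finset.sum_congr _ (fun _ _ => rfl)
  ext s
  simp only [Finset.mem_Icc, Finset.mem_Ico]
  omega

lemma tp_sub {e i : ℕ} (h1 : 1 ≤ e) (h2 : e ≤ i) :
    T.tp p i - T.tp p e = ∑ s ∈ Finset.Ico e i, T.lam p s := by
  rw [tp_eq_Ico, tp_eq_Ico]
  have := Finset.sum_Ico_consecutive (T.lam p) h1 h2
  linarith

section WithPath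

variable (hadj : ∀ i, 1 ≤ i → i + 1 ≤ m → T.G.Adj (p i) (p (i+1)))
variable (hinj : ∀ ⦃i j⦄, 1 ≤ i → i ≤ m → 1 ≤ j → j ≤ m → p i = p j → i = j)

include hadj hinj

lemma p_ne {i j : ℕ} (h1 : 1 ≤ i) (h2 : i ≤ m) (h3 : 1 ≤ j) (h4 : j ≤ m) (h : i ≠ j) :
    p i ≠ p j := fun he => h (hinj h1 h2 h3 h4 he)

lemma lam_pos {i : ℕ} (h1 : 1 ≤ i) (h2 : i + 1 ≤ m) : 0 < T.lam p i :=
  T.d_pos (p_ne hadj hinj h1 (by omega) (by omega) h2 (by omega))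

lemma tp_strict_mono {i j : ℕ} (h1 : 1 ≤ i) (h : i < j) (h2 : j ≤ m) :
    T.tp p i < T.tp p j := by
  have h3 : T.tp p (i+1) = T.tp p i + T.lam p i := tp_succ h1
  have h4 : 0 < T.lam p i := lam_pos hadj hinj h1 (by omega)
  have h5 : T.tp p (i+1) ≤ T.tp p j := tp_mono h
  linarith

lemma tp_inj {i j : ℕ} (h1 : 1 ≤ i) (h2 : i ≤ m) (h3 : 1 ≤ j) (h4 : j ≤ m)
    (h : T.tp p i = T.tp p j) : i = j := by
  rcases lt_trichotomy i j with hlt | heq | hgt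
  · exact absurd h (ne_of_lt (tp_strict_mono hadj hinj h1 hlt h4))
  · exact heq
  · exact absurd h.symm (ne_of_lt (tp_strict_mono hadj hinj h3 hgt h2))

lemma left_step (v : V) {i : ℕ} (hL : p i ∈ (T.upath v (p (i+1))).support) :
    T.d v (p (i+1)) = T.d v (p i) + T.lam p i :=
  T.d_split_s12 hL

lemma left_of_not_right (v : V) {i : ℕ} (h1 : 1 ≤ i) (h2 : i + 1 ≤ m)
    (hL : p i ∉ (T.upath v (p (i+1))).support) :
    p (i+1) ∈ (T.upath v (p i)).support :=
  T.d_dichotomy (hadj i h1 h2) v hL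

/-- If P is the unique path from v to u', and z in its support is adjacent to u',
then P.support = (P.takeUntil z _).support ++ [u']. -/
lemma support_split_adj {v u' z : V} (hadjz : T.G.Adj z u')
    (hz : z ∈ (T.upath v u').support) :
    (T.upath v u').support = ((T.upath v u').takeUntil z hz).support ++ [u'] := by
  have hP := T.upath_isPath v u'
  have hdp : ((T.upath v u').dropUntil z hz).IsPath := hP.dropUntil hz
  have hde : (T.upath v u').dropUntil z hz = T.upath z u' := T.upath_unique hdp
  have h3 := congrArg SimpleGraph.Walk.support (SimpleGraph.Walk.take_spec (T.upath v u') hz)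
  rw [SimpleGraph.Walk.support_append] at h3
  rw [← h3, hde, T.upath_adj hadjz]
  simp

lemma left_mono (v : V) {i : ℕ} (h1 : 1 ≤ i) (h2 : i + 2 ≤ m)
    (hL : p i ∈ (T.upath v (p (i+1))).support) :
    p (i+1) ∈ (T.upath v (p (i+2))).support := by
  by_contra hc
  have hmem : p (i+2) ∈ (T.upath v (p (i+1))).support :=
    T.d_dichotomy (hadj (i+1) (by omega) (by omega)) v hc
  have hne1 : p (i+2) ≠ p (i+1) := p_ne hadj hinj (by omega) h2 (by omega) (by omega) (by omega)
  have hne2 : p i ≠ p (i+1) := p_ne hadj hinj h1 (by omega) (by omega) (by omega) (by omega)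
  have hne3 : p i ≠ p (i+2) := p_ne hadj hinj h1 (by omega) (by omega) h2 (by omega)
  -- p (i+2) lies on the unique path from v to p i
  have hA : p (i+2) ∈ (T.upath v (p i)).support := by
    have hs := support_split_adj hadj hinj (hadj i h1 (by omega)) hL
    have : p (i+2) ∈ ((T.upath v (p (i+1))).takeUntil (p i) hL).support := by
      rcases List.mem_append.1 (hs ▸ hmem) with h | h
      · exact h
      · simp only [List.mem_singleton] at h; exact absurd h hne1
    have htp : ((T.upath v (p (i+1))).takeUntil (p i) hL).IsPath :=
      (T.upath_isPath v (p (i+1))).takeUntil hL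
    rwa [T.upath_unique htp] at this
  -- p i lies on the unique path from v to p (i+2)
  have hB : p i ∈ (T.upath v (p (i+2))).support := by
    have hs := support_split_adj hadj hinj ((hadj (i+1) (by omega) h2).symm) hmem
    have : p i ∈ ((T.upath v (p (i+1))).takeUntil (p (i+2)) hmem).support := by
      rcases List.mem_append.1 (hs ▸ hL) with h | h
      · exact h
      · simp only [List.mem_singleton] at h; exact absurd h hne2
    have htp : ((T.upath v (p (i+1))).takeUntil (p (i+2)) hmem).IsPath :=
      (T.upath_isPath v (p (i+1))).takeUntil hmem
    rwa [T.upath_unique htp] at this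
  have e1 : T.d v (p i) = T.d v (p (i+2)) + T.d (p (i+2)) (p i) := T.d_split_s12 hA
  have e2 : T.d v (p (i+2)) = T.d v (p i) + T.d (p i) (p (i+2)) := T.d_split_s12 hB
  have e3 : T.d (p (i+2)) (p i) = T.d (p i) (p (i+2)) := T.d_symm _ _
  have e4 : 0 < T.d (p i) (p (i+2)) := T.d_pos hne3
  linarith

/-- the gate lemma -/
lemma exists_gate_s12 (hm : 1 ≤ m) (v : V) :
    ∃ g, 1 ≤ g ∧ g ≤ m ∧ ∀ i, 1 ≤ i → i ≤ m →
      T.d v (p i) = T.d v (p g) + |T.tp p i - T.tp p g| := by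
  classical
  have main : ∀ g, 1 ≤ g → g ≤ m →
      (∀ i, g ≤ i → i + 1 ≤ m → p i ∈ (T.upath v (p (i+1))).support) →
      (∀ i, 1 ≤ i → i + 1 ≤ m → i < g → p i ∉ (T.upath v (p (i+1))).support) →
      ∀ i, 1 ≤ i → i ≤ m → T.d v (p i) = T.d v (p g) + |T.tp p i - T.tp p g| := by
    intro g hg1 hg2 habove hbelow
    have up : ∀ i, g ≤ i → i ≤ m →
        T.d v (p i) = T.d v (p g) + (T.tp p i - T.tp p g) := by
      intro i hgi
      induction i, hgi using Nat.le_induction with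
      | base => intro _; ring_nf
      | succ n hn ih =>
        intro h2
        have e := left_step (p := p) hadj hinj v (habove n hn h2)
        have e2 := ih (by omega)
        have e3 := tp_succ (T := T) (p := p) (i := n) (by omega)
        linarith
    have down : ∀ k i, i + k = g → 1 ≤ i →
        T.d v (p i) = T.d v (p g) + (T.tp p g - T.tp p i) := by
      intro k
      induction k with
      | zero => intro i hi _; have : i = g := by omega
                subst this; ring_nf
      | succ n ih =>
        intro i hi h1
        have hnotL := hbelow i h1 (by omega) (by omega)
        have hr := left_of_not_right hadj hinj v h1 (by omega) hnotL
        have e1 : T.d v (p i) = T.d v (p (i+1)) + T.d (p (i+1)) (p i) := T.d_split_s12 hr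
        have e2 : T.d (p (i+1)) (p i) = T.lam p i := T.d_symm _ _
        have e3 := ih (i+1) (by omega) (by omega)
        have e4 := tp_succ (T := T) (p := p) (i := i) h1
        linarith
    intro i h1 h2
    rcases le_or_gt g i with hgi | hgi
    · rw [abs_of_nonneg (by have := tp_mono (T := T) (p := p) hgi; linarith)]
      exact up i hgi h2
    · rw [abs_of_nonpos (by have := tp_mono (T := T) (p := p) hgi.le; linarith)]
      have := down (g - i) i (by omega) h1
      linarith
  set S : Finset ℕ := (Finset.Icc 1 (m-1)).filter
    (fun i => p i ∈ (T.upath v (p (i+1))).support) with hS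
  by_cases h : S.Nonempty
  · obtain ⟨hIcc, hL⟩ := Finset.mem_filter.1 (S.min'_mem h)
    rw [Finset.mem_Icc] at hIcc
    refine ⟨S.min' h, ?_, ?_, ?_⟩
    · omega
    · omega
    · have hmem : (1 ≤ S.min' h ∧ S.min' h ≤ m - 1) ∧
          p (S.min' h) ∈ (T.upath v (p (S.min' h + 1))).support := ⟨hIcc, hL⟩
      apply main
      · omega
      · omega
      · intro i hgi
        induction i, hgi using Nat.le_induction with
        | base => intro _; exact hmem.2
        | succ n hn ih =>
          intro h2
          exact left_mono hadj hinj v (by omega) h2 (ih (by omega))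
      · intro i h1 h2 hlt hmemi
        have hiS : i ∈ S := Finset.mem_filter.2 ⟨Finset.mem_Icc.2 ⟨h1, by omega⟩, hmemi⟩
        have := S.min'_le i hiS
        omega
  · refine ⟨m, hm, le_refl m, ?_⟩
    apply main m hm (le_refl m)
    · intro i hgi h2; omega
    · intro i h1 h2 _ hmemi
      exact h ⟨i, Finset.mem_filter.2 ⟨Finset.mem_Icc.2 ⟨h1, by omega⟩, hmemi⟩⟩

end WithPath
end WeightedTree


lemma double_abs_sum (B lamf t : ℕ → ℝ) (a : ℕ) (hnn : ∀ s, 0 ≤ lamf s) :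
    ∀ b, a ≤ b →
    (∀ e i, a ≤ e → e ≤ i → i ≤ b → t i - t e = ∑ s ∈ Finset.Ico e i, lamf s) →
    ∑ e ∈ Finset.Icc a b, ∑ i ∈ Finset.Icc a b, B e * (B i * |t i - t e|)
      = 2 * ∑ s ∈ Finset.Ico a b, lamf s *
          ((∑ e ∈ Finset.Icc a s, B e) * (∑ i ∈ Finset.Icc (s+1) b, B i)) := by
  intro b hb
  induction b, hb using Nat.le_induction with
  | base => intro _; simp
  | succ n hn ih =>
    intro ht
    have htn : ∀ e i, a ≤ e → e ≤ i → i ≤ n → t i - t e = ∑ s ∈ Finset.Ico e i, lamf s :=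
      fun e i h1 h2 h3 => ht e i h1 h2 (by omega)
    have hmono : ∀ e, a ≤ e → e ≤ n+1 → t e ≤ t (n+1) := by
      intro e h1 h2
      have h3 := ht e (n+1) h1 h2 (le_refl _)
      have h4 : 0 ≤ ∑ s ∈ Finset.Ico e (n+1), lamf s :=
        Finset.sum_nonneg fun s _ => hnn s
      linarith
    have hsingle : ∑ e ∈ Finset.Icc a n, B e * (t (n+1) - t e)
        = ∑ s ∈ Finset.Ico a (n+1), lamf s * (∑ e ∈ Finset.Icc a s, B e) := by
      have step1 : ∀ e ∈ Finset.Icc a n, B e * (t (n+1) - t e)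
          = ∑ s ∈ Finset.Ico a (n+1), (if e ≤ s then B e * lamf s else 0) := by
        intro e he; rw [Finset.mem_Icc] at he
        rw [ht e (n+1) he.1 (by omega) (le_refl _), Finset.mul_sum, ← Finset.sum_filter]
        apply Finset.sum_congr _ (fun _ _ => rfl)
        ext s
        simp only [Finset.mem_Ico, Finset.mem_filter]
        omega
      rw [Finset.sum_congr rfl step1, Finset.sum_comm]
      apply Finset.sum_congr rfl
      intro s hs; rw [Finset.mem_Ico] at hs
      rw [← Finset.sum_filter]
      have hfe : (Finset.Icc a n).filter (fun e => e ≤ s) = Finset.Icc a s := by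
        ext e
        simp only [Finset.mem_Icc, Finset.mem_filter]
        omega
      rw [hfe, ← Finset.sum_mul]
      ring
    -- decompose LHS
    have hout : ∀ e, ∑ i ∈ Finset.Icc a (n+1), B e * (B i * |t i - t e|)
        = (∑ i ∈ Finset.Icc a n, B e * (B i * |t i - t e|))
          + B e * (B (n+1) * |t (n+1) - t e|) :=
      fun e => Finset.sum_Icc_succ_top (by omega) _
    rw [Finset.sum_Icc_succ_top (by omega : a ≤ n+1), Finset.sum_congr rfl fun e _ => hout e,
      Finset.sum_add_distrib, ih htn]
    have habs1 : ∀ e ∈ Finset.Icc a n, B e * (B (n+1) * |t (n+1) - t e|)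
        = B (n+1) * (B e * (t (n+1) - t e)) := by
      intro e he; rw [Finset.mem_Icc] at he
      rw [abs_of_nonneg (by have := hmono e he.1 (by omega); linarith)]; ring
    have habs2 : ∀ i ∈ Finset.Icc a n, B (n+1) * (B i * |t i - t (n+1)|)
        = B (n+1) * (B i * (t (n+1) - t i)) := by
      intro i hi; rw [Finset.mem_Icc] at hi
      rw [abs_of_nonpos (by have := hmono i hi.1 (by omega); linarith), neg_sub]
    rw [Finset.sum_congr rfl habs1, hout (n+1), Finset.sum_congr rfl habs2,
      sub_self, abs_zero, mul_zero, mul_zero, add_zero, ← Finset.mul_sum,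
      hsingle]
    -- now RHS side
    have split_i : ∀ s ∈ Finset.Ico a (n+1),
        lamf s * ((∑ e ∈ Finset.Icc a s, B e) * ∑ i ∈ Finset.Icc (s+1) (n+1), B i)
        = lamf s * ((∑ e ∈ Finset.Icc a s, B e) * ∑ i ∈ Finset.Icc (s+1) n, B i)
          + lamf s * (∑ e ∈ Finset.Icc a s, B e) * B (n+1) := by
      intro s hs
      rw [Finset.mem_Ico] at hs
      rw [Finset.sum_Icc_succ_top (by omega : s + 1 ≤ n + 1)]
      ring
    rw [Finset.sum_congr rfl split_i, Finset.sum_add_distrib]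
    have E1 : ∑ x ∈ Finset.Ico a (n+1),
        lamf x * ((∑ e ∈ Finset.Icc a x, B e) * ∑ i ∈ Finset.Icc (x + 1) n, B i)
        = ∑ x ∈ Finset.Ico a n,
            lamf x * ((∑ e ∈ Finset.Icc a x, B e) * ∑ i ∈ Finset.Icc (x + 1) n, B i) := by
      rw [Finset.sum_Ico_succ_top hn, Finset.Icc_eq_empty (by omega : ¬ n + 1 ≤ n)]
      simp
    have E2 : ∑ x ∈ Finset.Ico a (n+1), (lamf x * ∑ e ∈ Finset.Icc a x, B e) * B (n+1)
        = (∑ k ∈ Finset.Ico a n, lamf k * ∑ e ∈ Finset.Icc a k, B e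
            + lamf n * ∑ e ∈ Finset.Icc a n, B e) * B (n+1) := by
      rw [← Finset.sum_mul, Finset.sum_Ico_succ_top hn]
    rw [E1, E2, Finset.sum_Ico_succ_top hn]
    ring

namespace WeightedTree

variable {V : Type*} [Fintype V] [DecidableEq V] {T : WeightedTree V} {p : ℕ → V} {m : ℕ}

lemma mem_seg {a b : ℕ} {u : V} (hab : a ≤ b) :
    u ∈ seg p a b ↔ ∃ i, a ≤ i ∧ i ≤ b ∧ p i = u := by
  simp only [seg, List.mem_map, List.mem_range]
  constructor
  · rintro ⟨i, hi, rfl⟩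
    exact ⟨a + i, by omega, by omega, rfl⟩
  · rintro ⟨i, h1, h2, rfl⟩
    exact ⟨i - a, by omega, by rw [show a + (i - a) = i by omega]⟩

section WithGate

variable (hadj : ∀ i, 1 ≤ i → i + 1 ≤ m → T.G.Adj (p i) (p (i+1)))
variable (hinj : ∀ ⦃i j⦄, 1 ≤ i → i ≤ m → 1 ≤ j → j ≤ m → p i = p j → i = j)
variable {g : V → ℕ}
variable (hg : ∀ v, 1 ≤ g v ∧ g v ≤ m ∧ ∀ i, 1 ≤ i → i ≤ m →
      T.d v (p i) = T.d v (p (g v)) + |T.tp p i - T.tp p (g v)|)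

include hadj hinj hg

lemma closest_seg {a b : ℕ} (h1a : 1 ≤ a) (hab : a ≤ b) (hbm : b ≤ m) (v : V) :
    T.closest (seg p a b) v = p (max a (min b (g v))) := by
  obtain ⟨hg1, hg2, hgd⟩ := hg v
  set c := g v with hc
  set γ := max a (min b c) with hγ
  have hγab : a ≤ γ ∧ γ ≤ b := by omega
  have key : ∀ i, a ≤ i → i ≤ b → i ≠ γ → |T.tp p γ - T.tp p c| < |T.tp p i - T.tp p c| := by
    intro i hai hib hne
    rcases lt_or_ge c a with hca | hac
    · have hγa : γ = a := by omega
      have h1 : T.tp p c ≤ T.tp p a := tp_mono hca.le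
      have h2 : T.tp p a < T.tp p i :=
        tp_strict_mono hadj hinj h1a (by omega) (by omega)
      rw [hγa, abs_of_nonneg (by linarith), abs_of_nonneg (by linarith)]
      linarith
    · rcases lt_or_ge b c with hbc | hcb
      · have hγb : γ = b := by omega
        have h1 : T.tp p b ≤ T.tp p c := tp_mono hbc.le
        have h2 : T.tp p i < T.tp p b :=
          tp_strict_mono hadj hinj (by omega) (by omega) hbm
        rw [hγb, abs_of_nonpos (by linarith), abs_of_nonpos (by linarith)]
        linarith
      · have hγc : γ = c := by omega
        rw [hγc, sub_self, abs_zero]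
        refine abs_pos.2 (sub_ne_zero.2 fun h => hne ?_)
        rw [hγc]
        exact tp_inj hadj hinj (by omega) (by omega) (by omega) (by omega) h
  have hdle : ∀ i, a ≤ i → i ≤ b → T.d (p γ) v ≤ T.d (p i) v := by
    intro i hai hib
    rw [T.d_symm (p γ) v, T.d_symm (p i) v, hgd i (by omega) (by omega),
      hgd γ (by omega) (by omega)]
    by_cases h : i = γ
    · rw [h]
    · exact add_le_add_right (key i hai hib h).le _
  have hdlt : ∀ i, a ≤ i → i ≤ b → i ≠ γ → T.d (p γ) v < T.d (p i) v := by
    intro i hai hib hne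
    rw [T.d_symm (p γ) v, T.d_symm (p i) v, hgd i (by omega) (by omega),
      hgd γ (by omega) (by omega)]
    exact add_lt_add_right (key i hai hib hne) _
  have hmemγ : p γ ∈ seg p a b := (mem_seg hab).2 ⟨γ, hγab.1, hγab.2, rfl⟩
  have hex : ∃ u ∈ seg p a b, ∀ u' ∈ seg p a b, T.d u v ≤ T.d u' v := by
    refine ⟨p γ, hmemγ, ?_⟩
    intro u' hu'
    obtain ⟨i, h1, h2, rfl⟩ := (mem_seg hab).1 hu'
    exact hdle i h1 h2
  rw [closest, dif_pos hex]
  obtain ⟨hmem, hmin⟩ := hex.choose_spec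
  obtain ⟨i, h1, h2, hpi⟩ := (mem_seg hab).1 hmem
  by_cases hne : i = γ
  · rw [← hpi, hne]
  · exfalso
    have h3 := hmin (p γ) hmemγ
    rw [← hpi] at h3
    exact absurd h3 (not_le.2 (hdlt i h1 h2 hne))

lemma d_tp {i e : ℕ} (hi1 : 1 ≤ i) (hi2 : i ≤ m) (he1 : 1 ≤ e) (he2 : e ≤ m) :
    T.d (p i) (p e) = |T.tp p i - T.tp p e| := by
  obtain ⟨h1, h2, hd⟩ := hg (p e)
  have h0 := hd e he1 he2
  rw [T.d_self] at h0
  have hd1 : 0 ≤ T.d (p e) (p (g (p e))) := T.d_nonneg _ _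
  have hd2 : 0 ≤ |T.tp p e - T.tp p (g (p e))| := abs_nonneg _
  have h3 : |T.tp p e - T.tp p (g (p e))| = 0 := by linarith
  have h5 : T.tp p (g (p e)) = T.tp p e := by
    have := abs_eq_zero.1 h3; linarith
  have h6 : T.d (p e) (p (g (p e))) = 0 := by linarith
  rw [T.d_symm (p i) (p e), hd i hi1 hi2, h5, h6, zero_add, abs_sub_comm]

lemma gate_self {i : ℕ} (hi1 : 1 ≤ i) (hi2 : i ≤ m) : g (p i) = i := by
  obtain ⟨h1, h2, hd⟩ := hg (p i)
  have h0 := hd i hi1 hi2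
  rw [T.d_self] at h0
  have hd1 : 0 ≤ T.d (p i) (p (g (p i))) := T.d_nonneg _ _
  have hd2 : 0 ≤ |T.tp p i - T.tp p (g (p i))| := abs_nonneg _
  have h3 : |T.tp p i - T.tp p (g (p i))| = 0 := by linarith
  have h5 : T.tp p (g (p i)) = T.tp p i := by
    have := abs_eq_zero.1 h3; linarith
  exact tp_inj hadj hinj h1 h2 hi1 hi2 h5

lemma Sbar_seg {a b : ℕ} (h1a : 1 ≤ a) (hab : a < b) (hbm : b ≤ m) :
    T.Sbar (seg p a b) = (2 / T.vt) * ∑ s ∈ Finset.Ico a b,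
      T.lam p s * ((∑ v ∈ Finset.univ.filter (fun v => g v ≤ s), T.w v) *
        ((∑ v, T.w v) - ∑ v ∈ Finset.univ.filter (fun v => g v ≤ s), T.w v)) := by
  classical
  set γf : V → ℕ := fun v => max a (min b (g v)) with hγf
  set B : ℕ → ℝ := fun e => ∑ v ∈ Finset.univ.filter (fun v => γf v = e), T.w v with hB
  have hγmem : ∀ v, a ≤ γf v ∧ γf v ≤ b := by
    intro v; simp only [hγf]; omega
  have hclo : ∀ v, T.closest (seg p a b) v = p (γf v) := by
    intro v; simp only [hγf]
    exact closest_seg hadj hinj hg h1a hab.le hbm v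
  have hwB : ∀ e, a ≤ e → e ≤ b → T.wBranch (seg p a b) (p e) = B e := by
    intro e he1 he2
    simp only [wBranch, hB]
    apply Finset.sum_congr _ (fun _ _ => rfl)
    apply Finset.filter_congr
    intro v _
    rw [hclo v]
    constructor
    · intro h
      exact hinj (by have := (hγmem v).1; omega) (by have := (hγmem v).2; omega)
        (by omega) (by omega) h
    · intro h; rw [h]
  have hdbar : ∀ e, a ≤ e → e ≤ b → T.dbar (seg p a b) (p e)
      = ∑ i ∈ Finset.Icc a b, B i * |T.tp p i - T.tp p e| := by
    intro e he1 he2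
    have hlist : T.dbar (seg p a b) (p e)
        = ∑ i' ∈ Finset.range (b + 1 - a),
            T.wBranch (seg p a b) (p (a + i')) * T.d (p (a + i')) (p e) := by
      simp only [dbar, seg, List.map_map]
      rfl
    rw [hlist, show Finset.Icc a b = Finset.Ico a (b+1) from (Finset.Ico_add_one_right_eq_Icc a b).symm,
      Finset.sum_Ico_eq_sum_range, show b + 1 - a = b + 1 - a from rfl]
    apply Finset.sum_congr rfl
    intro i' hi'
    rw [Finset.mem_range] at hi'
    rw [hwB (a + i') (by omega) (by omega),
      d_tp hadj hinj hg (by omega) (by omega) (by omega) (by omega)]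
  simp only [Sbar, s, sOn]
  have hstep : ∀ v : V, T.w v * (1 / T.vt * T.dbar (seg p a b) (T.closest (seg p a b) v))
      = (1 / T.vt) * (T.w v * ∑ i ∈ Finset.Icc a b, B i * |T.tp p i - T.tp p (γf v)|) := by
    intro v
    rw [hclo v, hdbar (γf v) (hγmem v).1 (hγmem v).2]
    ring
  rw [Finset.sum_congr rfl (fun v _ => hstep v), ← Finset.mul_sum]
  have hgrp : (∑ v, T.w v * ∑ i ∈ Finset.Icc a b, B i * |T.tp p i - T.tp p (γf v)|)
      = ∑ e ∈ Finset.Icc a b, B e * ∑ i ∈ Finset.Icc a b, B i * |T.tp p i - T.tp p e| := by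
    rw [← Finset.sum_fiberwise_of_maps_to (fun v (_ : v ∈ Finset.univ) =>
      Finset.mem_Icc.2 (hγmem v))
      (fun v => T.w v * ∑ i ∈ Finset.Icc a b, B i * |T.tp p i - T.tp p (γf v)|)]
    apply Finset.sum_congr rfl
    intro e _
    have hin : ∀ v ∈ Finset.univ.filter (fun v => γf v = e),
        T.w v * ∑ i ∈ Finset.Icc a b, B i * |T.tp p i - T.tp p (γf v)|
        = T.w v * ∑ i ∈ Finset.Icc a b, B i * |T.tp p i - T.tp p e| := by
      intro v hv
      rw [(Finset.mem_filter.1 hv).2]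
    rw [Finset.sum_congr rfl hin, ← Finset.sum_mul, hB]
  rw [hgrp,
    Finset.sum_congr rfl (fun e (_ : e ∈ Finset.Icc a b) => Finset.mul_sum _ _ _),
    double_abs_sum B (T.lam p) (T.tp p) a (fun s => lam_nonneg s) b hab.le
      (fun e i he1 hei _ => tp_sub (by omega) hei)]
  have hCA : ∀ s, a ≤ s → s < b → (∑ e ∈ Finset.Icc a s, B e)
      = ∑ v ∈ Finset.univ.filter (fun v => g v ≤ s), T.w v := by
    intro s hs1 hs2
    have hmap : ∀ v ∈ Finset.univ.filter (fun v => g v ≤ s), γf v ∈ Finset.Icc a s := by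
      intro v hv
      rw [Finset.mem_filter] at hv
      rw [Finset.mem_Icc]
      have := hv.2
      simp only [hγf]
      omega
    rw [← Finset.sum_fiberwise_of_maps_to hmap T.w]
    apply Finset.sum_congr rfl
    intro e he
    rw [Finset.mem_Icc] at he
    simp only [hB]
    congr 1
    rw [Finset.filter_filter]
    apply Finset.filter_congr
    intro v _
    simp only [hγf]
    constructor
    · intro h
      exact ⟨by omega, h⟩
    · intro h
      exact h.2
  have htot : ∑ e ∈ Finset.Icc a b, B e = ∑ v, T.w v := by
    rw [← Finset.sum_fiberwise_of_maps_to (fun v (_ : v ∈ Finset.univ) =>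
      Finset.mem_Icc.2 (hγmem v)) T.w]
  have hCB : ∀ s, a ≤ s → s < b → (∑ i ∈ Finset.Icc (s+1) b, B i)
      = (∑ v, T.w v) - ∑ v ∈ Finset.univ.filter (fun v => g v ≤ s), T.w v := by
    intro s hs1 hs2
    have hsplit : ∑ e ∈ Finset.Icc a s, B e + ∑ e ∈ Finset.Icc (s+1) b, B e
        = ∑ e ∈ Finset.Icc a b, B e := by
      rw [← Finset.Ico_add_one_right_eq_Icc a s, ← Finset.Ico_add_one_right_eq_Icc (s+1) b, ← Finset.Ico_add_one_right_eq_Icc a b]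
      exact Finset.sum_Ico_consecutive _ (by omega) (by omega)
    rw [hCA s hs1 hs2] at hsplit
    rw [htot] at hsplit
    linarith
  have hfin : ∀ s ∈ Finset.Ico a b,
      T.lam p s * ((∑ e ∈ Finset.Icc a s, B e) * ∑ e ∈ Finset.Icc (s+1) b, B e)
      = T.lam p s * ((∑ v ∈ Finset.univ.filter (fun v => g v ≤ s), T.w v) *
          ((∑ v, T.w v) - ∑ v ∈ Finset.univ.filter (fun v => g v ≤ s), T.w v)) := by
    intro s hs
    rw [Finset.mem_Ico] at hs
    rw [hCA s hs.1 hs.2, hCB s hs.1 hs.2]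
  rw [Finset.sum_congr rfl hfin]
  ring

end WithGate
end WeightedTree

/-- as a subpath of fixed length `l` is shifted along the path
`p(1), …, p(m)`, the mean service time `S̄` is increasing–decreasing (unimodal). -/
theorem sbar_shift_unimodal {V : Type*} [Fintype V] [DecidableEq V]
    (T : WeightedTree V) {x y : V} (W : T.G.Walk x y) (hW : W.IsPath)
    (m k : ℕ) (hk : 2 ≤ k) (hkm : k ≤ m) (p : ℕ → V)
    (hsupp : W.support = (List.range m).map (fun j => p (j + 1)))
    (hwpos : ∀ v, 0 < T.w v) (l : ℝ)
    (hlen : ∀ j ∈ Finset.Icc 1 (m - k + 1), T.d (p j) (p (j + k - 1)) = l) :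
    ∀ j, 1 ≤ j → j ≤ m - k - 1 →
      T.Sbar (seg p j (j + k - 1)) > T.Sbar (seg p (j + 1) (j + k)) →
      T.Sbar (seg p (j + 1) (j + k)) > T.Sbar (seg p (j + 2) (j + k + 1)) := by
  intro j hj1 hj2 hS1
  have hm1 : 1 ≤ m := by omega
  -- adjacency along the path
  have hadj : ∀ i, 1 ≤ i → i + 1 ≤ m → T.G.Adj (p i) (p (i+1)) := by
    have hchain := W.isChain_adj_support
    rw [hsupp, List.isChain_iff_getElem] at hchain
    intro i h1 h2
    have hl : (((List.range m).map fun j => p (j + 1))).length = m := by simp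
    have h3 : i - 1 + 1 < (((List.range m).map fun j => p (j + 1))).length := by omega
    have h4 := hchain (i-1) h3
    simp only [List.get_eq_getElem, List.getElem_map, List.getElem_range] at h4
    rw [show i - 1 + 1 = i by omega] at h4
    exact h4
  -- injectivity of vertices along the path
  have hinj : ∀ ⦃i j'⦄, 1 ≤ i → i ≤ m → 1 ≤ j' → j' ≤ m → p i = p j' → i = j' := by
    have hnd : (((List.range m).map fun j => p (j + 1))).Nodup := by
      rw [← hsupp]; exact hW.support_nodup
    have h2 := (List.nodup_map_iff_inj_on List.nodup_range).1 hnd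
    intro i j' h1 h3 h4 h5 he
    have h6 := h2 (i-1) (List.mem_range.2 (by omega)) (j'-1) (List.mem_range.2 (by omega))
    rw [show i - 1 + 1 = i by omega, show j' - 1 + 1 = j' by omega] at h6
    have := h6 he
    omega
  -- the gate function
  choose g hga hgb hgc using fun v => WeightedTree.exists_gate_s12 hadj hinj hm1 v
  have hg : ∀ v, 1 ≤ g v ∧ g v ≤ m ∧ ∀ i, 1 ≤ i → i ≤ m →
      T.d v (p i) = T.d v (p (g v)) + |T.tp p i - T.tp p (g v)| :=
    fun v => ⟨hga v, hgb v, hgc v⟩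
  set C : ℕ → ℝ := fun s => ∑ v ∈ Finset.univ.filter (fun v => g v ≤ s), T.w v with hC
  set Wt : ℝ := ∑ v, T.w v with hWt
  -- the window formula
  have hSb : ∀ x y, 1 ≤ x → x < y → y ≤ m → T.Sbar (seg p x y)
      = (2 / T.vt) * ∑ s ∈ Finset.Ico x y, T.lam p s * (C s * (Wt - C s)) := by
    intro x y h1 h2 h3
    rw [WeightedTree.Sbar_seg hadj hinj hg h1 h2 h3]
  -- distances along the path
  have hdx : ∀ x y, 1 ≤ x → x ≤ y → y ≤ m → T.d (p x) (p y) = T.tp p y - T.tp p x := by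
    intro x y h1 h2 h3
    rw [WeightedTree.d_tp hadj hinj hg h1 (by omega) (by omega) h3,
      abs_of_nonpos (by have := WeightedTree.tp_mono (T := T) (p := p) h2; linarith), neg_sub]
  -- periodicity of edge lengths
  have hlam2 : ∀ x, 1 ≤ x → x + k ≤ m → T.lam p (x + k - 1) = T.lam p x := by
    intro x h1 h2
    have e1 := hlen x (Finset.mem_Icc.2 ⟨h1, by omega⟩)
    have e2 := hlen (x+1) (Finset.mem_Icc.2 ⟨by omega, by omega⟩)
    rw [hdx x (x+k-1) h1 (by omega) (by omega)] at e1
    rw [hdx (x+1) (x+1+k-1) (by omega) (by omega) (by omega)] at e2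
    rw [show x + 1 + k - 1 = (x + k - 1) + 1 by omega] at e2
    have e4 := WeightedTree.tp_succ (T := T) (p := p) (i := x + k - 1) (by omega)
    have e5 := WeightedTree.tp_succ (T := T) (p := p) (i := x) h1
    simp only [WeightedTree.lam] at e4 e5 ⊢
    linarith
  -- the difference formula
  have hdiff : ∀ x, 1 ≤ x → x + k ≤ m →
      T.Sbar (seg p (x+1) (x+k)) - T.Sbar (seg p x (x+k-1))
      = (2 / T.vt) * (T.lam p x *
          ((C (x+k-1) * (Wt - C (x+k-1))) - (C x * (Wt - C x)))) := by
    intro x h1 h2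
    have hlamx := hlam2 x h1 h2
    generalize hgy : x + k - 1 = y at hlamx ⊢
    rw [show x + k = y + 1 by omega]
    rw [hSb (x+1) (y+1) (by omega) (by omega) (by omega),
      hSb x y (by omega) (by omega) (by omega),
      Finset.sum_Ico_succ_top (by omega : x + 1 ≤ y),
      Finset.sum_eq_sum_Ico_succ_bot (by omega : x < y), hlamx]
    ring
  -- monotonicity of C
  have hCmono : ∀ s1 s2, s1 ≤ s2 → C s1 ≤ C s2 := by
    intro s1 s2 h
    apply Finset.sum_le_sum_of_subset_of_nonneg
    · intro v hv
      rw [Finset.mem_filter] at hv ⊢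
      exact ⟨hv.1, by omega⟩
    · intro v _ _
      exact T.w_nonneg v
  have hCstrict : ∀ s t', 1 ≤ s → s < t' → t' ≤ m → C s < C t' := by
    intro s t' h1 h2 h3
    have hgp : g (p (s+1)) = s + 1 :=
      WeightedTree.gate_self hadj hinj hg (by omega) (by omega)
    have hnotin : p (s+1) ∉ Finset.univ.filter (fun v => g v ≤ s) := by
      rw [Finset.mem_filter]
      push_neg
      intro _
      omega
    have hsub : insert (p (s+1)) (Finset.univ.filter (fun v => g v ≤ s))
        ⊆ Finset.univ.filter (fun v => g v ≤ t') := by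
      intro v hv
      rcases Finset.mem_insert.1 hv with rfl | hv'
      · exact Finset.mem_filter.2 ⟨Finset.mem_univ _, by omega⟩
      · rw [Finset.mem_filter] at hv' ⊢
        exact ⟨hv'.1, by omega⟩
    have h4 : T.w (p (s+1)) + C s
        = ∑ v ∈ insert (p (s+1)) (Finset.univ.filter (fun v => g v ≤ s)), T.w v :=
      (Finset.sum_insert hnotin).symm
    have h5 : ∑ v ∈ insert (p (s+1)) (Finset.univ.filter (fun v => g v ≤ s)), T.w v ≤ C t' :=
      Finset.sum_le_sum_of_subset_of_nonneg hsub (fun v _ _ => T.w_nonneg v)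
    have h6 := hwpos (p (s+1))
    linarith
  -- assemble
  have hd1 := hdiff j hj1 (by omega)
  have hd2 := hdiff (j+1) (by omega) (by omega)
  rw [show j + 1 + k = j + k + 1 by omega] at hd2
  rw [show j + k + 1 - 1 = j + k by omega] at hd2
  have hvt : (0:ℝ) < 2 / T.vt := div_pos two_pos T.vt_pos
  have hlamj : 0 < T.lam p j := WeightedTree.lam_pos hadj hinj hj1 (by omega)
  have hlamj1 : 0 < T.lam p (j+1) := WeightedTree.lam_pos hadj hinj (by omega) (by omega)
  have hA1 : C j < C (j+k-1) := hCstrict j (j+k-1) hj1 (by omega) (by omega)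
  have hA2 : C (j+1) < C (j+k) := hCstrict (j+1) (j+k) (by omega) (by omega) (by omega)
  have hB1 : C j ≤ C (j+1) := hCmono _ _ (by omega)
  have hB2 : C (j+k-1) ≤ C (j+k) := hCmono _ _ (by omega)
  have hX1 : (C (j+k-1) * (Wt - C (j+k-1))) - (C j * (Wt - C j)) < 0 := by
    by_contra hcon
    push_neg at hcon
    have h0 : 0 ≤ (2 / T.vt) * (T.lam p j *
        ((C (j+k-1) * (Wt - C (j+k-1))) - (C j * (Wt - C j)))) :=
      mul_nonneg hvt.le (mul_nonneg hlamj.le hcon)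
    rw [← hd1] at h0
    linarith
  have hfac : (C (j+k-1) - C j) * (Wt - C j - C (j+k-1)) < 0 := by
    have heq : (C (j+k-1) * (Wt - C (j+k-1))) - (C j * (Wt - C j))
        = (C (j+k-1) - C j) * (Wt - C j - C (j+k-1)) := by ring
    linarith [heq ▸ hX1]
  have hneg : Wt - C j - C (j+k-1) < 0 := by
    by_contra hcon
    push_neg at hcon
    have := mul_nonneg (by linarith : (0:ℝ) ≤ C (j+k-1) - C j) hcon
    linarith
  have hneg2 : Wt - C (j+1) - C (j+k) < 0 := by linarith
  have hX2 : (C (j+k) * (Wt - C (j+k))) - (C (j+1) * (Wt - C (j+1))) < 0 := by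
    have heq2 : (C (j+k) * (Wt - C (j+k))) - (C (j+1) * (Wt - C (j+1)))
        = (C (j+k) - C (j+1)) * (Wt - C (j+1) - C (j+k)) := by ring
    rw [heq2]
    exact mul_neg_of_pos_of_neg (by linarith) hneg2
  have hfinal : T.Sbar (seg p (j+2) (j+k+1)) - T.Sbar (seg p (j+1) (j+k)) < 0 := by
    rw [hd2]
    exact mul_neg_of_pos_of_neg hvt (mul_neg_of_pos_of_neg hlamj1 hX2)
  linarith
end
end
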